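/- (Theorem 2.1, coverage part.) For any δ ∈ (0,1), any sampling strategy (q_t), and any family of betting strategies (λ_t(m)) indexed by m ∈ [0,1], the sets C_t = {m ∈ [0,1] : W_t(m) < 1/δ} form a (1−δ)-confidence sequence for m*, i.e. P(∃ t ∈ {1,…,N} : m* ∉ C_t) ≤ δ. -/

import Mathlib

open MeasureTheory Finset

namespace RLFA

variable {Ω : Type*}

/-- `remaining I t ω` is the set `N_t = {1,…,N} \ {I_1, …, I_{t-1}}` of indices not yet
sampled before time `t`. -/
def remaining {N : ℕ} (I : ℕ → Ω → Fin N) (t : ℕ) (ω : Ω) : Finset (Fin N) :=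
  Finset.univ \ (Finset.Icc 1 (t - 1)).image fun j => I j ω

/-- The filtration `F_t = σ(I_1, …, I_t)`. -/
def filt {N : ℕ} (I : ℕ → Ω → Fin N) (t : ℕ) : MeasurableSpace Ω :=
  ⨆ j ∈ Finset.Icc 1 t, MeasurableSpace.comap (I j) ⊤

/-- The importance-weighted observation `Z_t = f(I_t) · π(I_t) / q_t(I_t)`. -/
noncomputable def Zt {N : ℕ} (π f : Fin N → ℝ) (q : ℕ → Ω → Fin N → ℝ)
    (I : ℕ → Ω → Fin N) (t : ℕ) (ω : Ω) : ℝ :=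
  f (I t ω) * (π (I t ω) / q t ω (I t ω))

/-- `μ_t(m) = m − Σ_{j=1}^{t−1} π(I_j) f(I_j)`. -/
def muT {N : ℕ} (π f : Fin N → ℝ) (I : ℕ → Ω → Fin N) (m : ℝ) (t : ℕ) (ω : Ω) : ℝ :=
  m - ∑ j ∈ Finset.Icc 1 (t - 1), π (I j ω) * f (I j ω)

/-! ### Auxiliary lemmas -/

lemma filt_mono {N : ℕ} (I : ℕ → Ω → Fin N) {a b : ℕ} (h : a ≤ b) : filt I a ≤ filt I b := by
  refine iSup₂_le fun j hj => ?_
  refine le_iSup₂ (f := fun j (_ : j ∈ Finset.Icc 1 b) => MeasurableSpace.comap (I j) ⊤) j ?_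
  rw [Finset.mem_Icc] at hj ⊢
  exact ⟨hj.1, hj.2.trans h⟩

lemma filt_le {N : ℕ} [m0 : MeasurableSpace Ω] (I : ℕ → Ω → Fin N)
    (hI : ∀ t, Measurable (I t)) (t : ℕ) : filt I t ≤ m0 :=
  iSup₂_le fun j _ => measurable_iff_comap_le.mp (hI j)

lemma meas_I {N : ℕ} (I : ℕ → Ω → Fin N) {j t : ℕ} (hj : 1 ≤ j) (hjt : j ≤ t) :
    Measurable[filt I t] (I j) := by
  refine measurable_iff_comap_le.mpr ?_
  exact le_iSup₂ (f := fun j (_ : j ∈ Finset.Icc 1 t) => MeasurableSpace.comap (I j) ⊤) j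
    (Finset.mem_Icc.mpr ⟨hj, hjt⟩)

lemma meas_comp {N : ℕ} (I : ℕ → Ω → Fin N) {j t : ℕ} (hj : 1 ≤ j) (hjt : j ≤ t)
    (g : Fin N → ℝ) : Measurable[filt I t] fun ω => g (I j ω) :=
  (measurable_from_top (f := g)).comp (meas_I I hj hjt)

lemma meas_eqI {N : ℕ} (I : ℕ → Ω → Fin N) {j t : ℕ} (hj : 1 ≤ j) (hjt : j ≤ t) (i : Fin N) :
    MeasurableSet[filt I t] {ω | I j ω = i} :=
  meas_I I hj hjt (MeasurableSpace.measurableSet_top (s := {i}))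

lemma meas_muT {N : ℕ} (π f : Fin N → ℝ) (I : ℕ → Ω → Fin N) (m : ℝ) (t : ℕ) :
    Measurable[filt I (t-1)] (muT π f I m t) := by
  unfold muT
  refine Measurable.sub measurable_const ?_
  refine Finset.measurable_sum _ fun j hj => ?_
  rw [Finset.mem_Icc] at hj
  exact meas_comp I hj.1 hj.2 (fun i => π i * f i)

lemma Zt_eq_sum {N : ℕ} (π f : Fin N → ℝ) (q : ℕ → Ω → Fin N → ℝ)
    (I : ℕ → Ω → Fin N) (t : ℕ) (ω : Ω) :
    Zt π f q I t ω = ∑ i : Fin N, if I t ω = i then f i * (π i / q t ω i) else 0 := by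
  rw [Finset.sum_ite_eq]
  simp [Zt]

lemma meas_Zt {N : ℕ} (π f : Fin N → ℝ) (q : ℕ → Ω → Fin N → ℝ)
    (I : ℕ → Ω → Fin N) {t : ℕ} (ht : 1 ≤ t)
    (hq : ∀ i, Measurable[filt I (t-1)] fun ω => q t ω i) :
    Measurable[filt I t] (Zt π f q I t) := by
  have h : Zt π f q I t = fun ω => ∑ i : Fin N, if I t ω = i then f i * (π i / q t ω i) else 0 :=
    funext fun ω => Zt_eq_sum π f q I t ω
  rw [h]
  refine Finset.measurable_sum _ fun i _ => ?_
  refine Measurable.ite (meas_eqI I ht le_rfl i) ?_ measurable_const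
  exact (measurable_const.div ((hq i).mono (filt_mono I (Nat.sub_le t 1)) le_rfl)).const_mul _

def hitSet (W : ℕ → Ω → ℝ) (c : ℝ) (N : ℕ) (ω : Ω) : Set ℕ :=
  {t | 1 ≤ t ∧ t ≤ N ∧ c ≤ W t ω}

open Classical in
noncomputable def hitTime (W : ℕ → Ω → ℝ) (c : ℝ) (N : ℕ) (ω : Ω) : ℕ :=
  if (hitSet W c N ω).Nonempty then sInf (hitSet W c N ω) else N

lemma hitTime_le (W : ℕ → Ω → ℝ) (c : ℝ) (N : ℕ) (ω : Ω) : hitTime W c N ω ≤ N := by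
  unfold hitTime
  classical
  split_ifs with h
  · exact (Nat.sInf_mem h).2.1
  · exact le_rfl

lemma hitTime_mem {W : ℕ → Ω → ℝ} {c : ℝ} {N : ℕ} {ω : Ω} (h : (hitSet W c N ω).Nonempty) :
    hitTime W c N ω ∈ hitSet W c N ω := by
  unfold hitTime
  classical
  rw [if_pos h]
  exact Nat.sInf_mem h

lemma le_hitTime_iff {W : ℕ → Ω → ℝ} {c : ℝ} {N : ℕ} {ω : Ω} {t : ℕ} (ht : t ≤ N) :
    t ≤ hitTime W c N ω ↔ ∀ s, 1 ≤ s → s < t → W s ω < c := by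
  unfold hitTime
  classical
  split_ifs with h
  · constructor
    · intro hle s hs1 hst
      have hns : s ∉ hitSet W c N ω := Nat.notMem_of_lt_sInf (lt_of_lt_of_le hst hle)
      by_contra hc
      exact hns ⟨hs1, le_trans (le_of_lt hst) ht, le_of_not_gt hc⟩
    · intro hall
      by_contra hlt
      push_neg at hlt
      have hmem := Nat.sInf_mem h
      exact absurd hmem.2.2 (not_le_of_gt (hall _ hmem.1 hlt))
  · constructor
    · intro _ s hs1 hst
      by_contra hc
      exact h ⟨s, hs1, le_trans (le_of_lt hst) ht, le_of_not_gt hc⟩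
    · intro _; exact ht

lemma sum_remaining {N : ℕ} (π f : Fin N → ℝ) (I : ℕ → Ω → Fin N) (ω : Ω) {t : ℕ}
    (htN : t ≤ N)
    (hWoR : ∀ s, 1 ≤ s → s ≤ N → I s ω ∈ remaining I s ω) :
    ∑ i ∈ remaining I t ω, f i * π i
      = (∑ i, π i * f i) - ∑ j ∈ Finset.Icc 1 (t - 1), π (I j ω) * f (I j ω) := by
  have hinj : Set.InjOn (fun j => I j ω) (Finset.Icc 1 (t-1)) := by
    intro j hj k hk hjk
    simp only [Finset.coe_Icc, Set.mem_Icc] at hj hk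
    by_contra hne
    rcases lt_or_gt_of_ne hne with h | h
    · have hmem := hWoR k hk.1 (le_trans hk.2 (le_trans (Nat.sub_le t 1) htN))
      simp only [remaining, Finset.mem_sdiff, Finset.mem_image] at hmem
      exact hmem.2 ⟨j, Finset.mem_Icc.mpr ⟨hj.1, Nat.le_sub_one_of_lt h⟩, hjk⟩
    · have hmem := hWoR j hj.1 (le_trans hj.2 (le_trans (Nat.sub_le t 1) htN))
      simp only [remaining, Finset.mem_sdiff, Finset.mem_image] at hmem
      exact hmem.2 ⟨k, Finset.mem_Icc.mpr ⟨hk.1, Nat.le_sub_one_of_lt h⟩, hjk.symm⟩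
  rw [remaining, Finset.sum_sdiff_eq_sub (Finset.subset_univ _), Finset.sum_image hinj]
  congr 1
  · exact Finset.sum_congr rfl fun i _ => mul_comm _ _
  · exact Finset.sum_congr rfl fun j _ => by rw [mul_comm]

lemma key_alg {ι : Type*} (R : Finset ι) (q g : ι → ℝ) (A L C : ℝ)
    (hqs : ∑ i ∈ R, q i = 1) (hqp : ∀ i ∈ R, 0 < q i)
    (hmu : ∑ i ∈ R, g i = C) :
    ∑ i ∈ R, q i * (A * (1 + L * (g i / q i - C))) = A := by
  have h1 : ∀ i ∈ R, q i * (A * (1 + L * (g i / q i - C)))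
      = A * q i + (A*L) * g i - (A*L*C) * q i := by
    intro i hi
    have hq0 : q i ≠ 0 := ne_of_gt (hqp i hi)
    field_simp
    ring
  rw [Finset.sum_congr rfl h1, Finset.sum_sub_distrib, Finset.sum_add_distrib,
    ← Finset.mul_sum, ← Finset.mul_sum, ← Finset.mul_sum, hqs, hmu]
  ring

/-- The factor of the stopped wealth process at time `t`. -/
noncomputable def stopFac {N : ℕ} (π f : Fin N → ℝ) (q : ℕ → Ω → Fin N → ℝ)
    (I : ℕ → Ω → Fin N) (lam1 : ℕ → Ω → ℝ) (τ : Ω → ℕ) (m : ℝ) (t : ℕ) (ω : Ω) : ℝ :=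
  1 + (if t ≤ τ ω then lam1 t ω else 0) * (Zt π f q I t ω - muT π f I m t ω)

/-- The stopped wealth process. -/
noncomputable def stopW {N : ℕ} (π f : Fin N → ℝ) (q : ℕ → Ω → Fin N → ℝ)
    (I : ℕ → Ω → Fin N) (lam1 : ℕ → Ω → ℝ) (τ : Ω → ℕ) (m : ℝ) (t : ℕ) (ω : Ω) : ℝ :=
  ∏ j ∈ Finset.Icc 1 t, stopFac π f q I lam1 τ m j ω

lemma stopW_zero {N : ℕ} (π f : Fin N → ℝ) (q : ℕ → Ω → Fin N → ℝ)
    (I : ℕ → Ω → Fin N) (lam1 : ℕ → Ω → ℝ) (τ : Ω → ℕ) (m : ℝ) (ω : Ω) :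
    stopW π f q I lam1 τ m 0 ω = 1 := by
  simp [stopW]

lemma stopW_succ {N : ℕ} (π f : Fin N → ℝ) (q : ℕ → Ω → Fin N → ℝ)
    (I : ℕ → Ω → Fin N) (lam1 : ℕ → Ω → ℝ) (τ : Ω → ℕ) (m : ℝ) (s : ℕ) (ω : Ω) :
    stopW π f q I lam1 τ m (s+1) ω
      = stopW π f q I lam1 τ m s ω * stopFac π f q I lam1 τ m (s+1) ω := by
  unfold stopW
  exact Finset.prod_Icc_succ_top (Nat.succ_le_succ (Nat.zero_le s)) _

/-- **Theorem 2.1, coverage part.** For any `δ ∈ (0,1)`, any sampling strategy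
`(q_t)`, and any family of betting strategies `(λ_t(m))` indexed by `m ∈ [0,1]`, the sets
`C_t = {m ∈ [0,1] : W_t(m) < 1/δ}` form a `(1−δ)`-confidence sequence for `m*`, i.e.
`P(∃ t ∈ {1,…,N} : m* ∉ C_t) ≤ δ`. -/
theorem statement3
    [m0 : MeasurableSpace Ω] (μ : Measure Ω) [IsProbabilityMeasure μ]
    {N : ℕ} (hN : 1 ≤ N)
    (π f : Fin N → ℝ)
    (hπ : ∀ i, π i ∈ Set.Ioc (0 : ℝ) 1) (hπsum : ∑ i, π i = 1)
    (hf : ∀ i, f i ∈ Set.Icc (0 : ℝ) 1)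
    (I : ℕ → Ω → Fin N) (hI : ∀ t, Measurable (I t))
    (q : ℕ → Ω → Fin N → ℝ)
    (hq_meas : ∀ t, 1 ≤ t → t ≤ N → ∀ i,
      StronglyMeasurable[filt I (t - 1)] fun ω => q t ω i)
    (hq_pos : ∀ t ω, 1 ≤ t → t ≤ N → ∀ i ∈ remaining I t ω, 0 < q t ω i)
    (hq_sum : ∀ t ω, 1 ≤ t → t ≤ N → ∑ i ∈ remaining I t ω, q t ω i = 1)
    (hWoR : ∀ t ω, 1 ≤ t → t ≤ N → I t ω ∈ remaining I t ω)
    (hcond : ∀ t, 1 ≤ t → t ≤ N → ∀ G : Ω → Fin N → ℝ,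
      (∀ i, StronglyMeasurable[filt I (t - 1)] fun ω => G ω i) →
      μ[(fun ω => G ω (I t ω)) | filt I (t - 1)]
        =ᵐ[μ] fun ω => ∑ i ∈ remaining I t ω, q t ω i * G ω i)
    (mstar : ℝ) (hmstar : mstar = ∑ i, π i * f i)
    -- a betting strategy `(λ_t(m))` for each `m ∈ [0,1]`
    (lam : ℝ → ℕ → Ω → ℝ)
    (hlam_meas : ∀ m ∈ Set.Icc (0 : ℝ) 1, ∀ t, 1 ≤ t → t ≤ N →
      StronglyMeasurable[filt I (t - 1)] (lam m t))
    (hfac : ∀ m ∈ Set.Icc (0 : ℝ) 1, ∀ t, 1 ≤ t → t ≤ N →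
      ∀ᵐ ω ∂μ, 0 ≤ 1 + lam m t ω * (Zt π f q I t ω - muT π f I m t ω))
    -- the wealth processes `W_t(m)` for each `m ∈ [0,1]`
    (W : ℝ → ℕ → Ω → ℝ)
    (hW0 : ∀ m ∈ Set.Icc (0 : ℝ) 1, ∀ ω, W m 0 ω = 1)
    (hWrec : ∀ m ∈ Set.Icc (0 : ℝ) 1, ∀ t, 1 ≤ t → t ≤ N → ∀ ω,
      W m t ω = W m (t - 1) ω * (1 + lam m t ω * (Zt π f q I t ω - muT π f I m t ω)))
    (δ : ℝ) (hδ : δ ∈ Set.Ioo (0 : ℝ) 1) :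
    μ {ω | ∃ t, 1 ≤ t ∧ t ≤ N ∧
        mstar ∉ {m : ℝ | m ∈ Set.Icc (0 : ℝ) 1 ∧ W m t ω < 1 / δ}} ≤ ENNReal.ofReal δ := by
  classical
  obtain ⟨hδ0, hδ1⟩ := hδ
  have hm01 : mstar ∈ Set.Icc (0:ℝ) 1 := by
    constructor
    · rw [hmstar]
      exact Finset.sum_nonneg fun i _ => mul_nonneg (le_of_lt (hπ i).1) (hf i).1
    · rw [hmstar]
      calc ∑ i, π i * f i ≤ ∑ i, π i * 1 :=
            Finset.sum_le_sum fun i _ =>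
              mul_le_mul_of_nonneg_left (hf i).2 (le_of_lt (hπ i).1)
        _ = 1 := by simpa using hπsum
  set τ : Ω → ℕ := hitTime (W mstar) (1/δ) N with hτdef
  have hle : ∀ t, filt I t ≤ m0 := filt_le I hI
  -- measurability of the wealth process
  have Wmeas : ∀ s, s ≤ N → Measurable[filt I s] (W mstar s) := by
    intro s
    induction s with
    | zero =>
      intro _
      have h : W mstar 0 = fun _ => (1:ℝ) := funext fun ω => hW0 mstar hm01 ω
      rw [h]; exact measurable_const
    | succ s ih =>
      intro hsN
      have hs : s ≤ N := le_trans (Nat.le_succ s) hsN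
      have h1 : 1 ≤ s + 1 := Nat.succ_le_succ (Nat.zero_le s)
      have h : W mstar (s+1) = fun ω => W mstar s ω *
          (1 + lam mstar (s+1) ω * (Zt π f q I (s+1) ω - muT π f I mstar (s+1) ω)) :=
        funext fun ω => hWrec mstar hm01 (s+1) h1 hsN ω
      rw [h]
      have hWm : Measurable[filt I (s+1)] (W mstar s) :=
        (ih hs).mono (filt_mono I (Nat.le_succ s)) le_rfl
      have hlamm : Measurable[filt I (s+1)] (lam mstar (s+1)) :=
        ((hlam_meas mstar hm01 (s+1) h1 hsN).measurable).mono (filt_mono I (Nat.le_succ s)) le_rfl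
      have hZ : Measurable[filt I (s+1)] (Zt π f q I (s+1)) :=
        meas_Zt π f q I h1 (fun i => (hq_meas (s+1) h1 hsN i).measurable)
      have hmu : Measurable[filt I (s+1)] (muT π f I mstar (s+1)) :=
        (meas_muT π f I mstar (s+1)).mono (filt_mono I (Nat.sub_le _ 1)) le_rfl
      exact hWm.mul (measurable_const.add (hlamm.mul (hZ.sub hmu)))
  -- measurability of the stopping events
  have hτmeas : ∀ t, 1 ≤ t → t ≤ N → MeasurableSet[filt I (t-1)] {ω | t ≤ τ ω} := by
    intro t ht1 htN
    have hset : {ω | t ≤ τ ω} = ⋂ s ∈ Finset.Icc 1 (t-1), {ω | W mstar s ω < 1/δ} := by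
      ext ω
      simp only [Set.mem_setOf_eq, Set.mem_iInter, Finset.mem_Icc, hτdef]
      rw [le_hitTime_iff htN]
      constructor
      · intro h s hs
        exact h s hs.1 (lt_of_le_of_lt hs.2 (Nat.sub_lt (lt_of_lt_of_le Nat.zero_lt_one ht1)
          Nat.zero_lt_one))
      · intro h s hs1 hst
        exact h s ⟨hs1, Nat.le_sub_one_of_lt hst⟩
    rw [hset]
    refine Finset.measurableSet_biInter _ fun s hs => ?_
    rw [Finset.mem_Icc] at hs
    have hWs : Measurable[filt I (t-1)] (W mstar s) :=
      (Wmeas s (le_trans hs.2 (le_trans (Nat.sub_le t 1) htN))).mono (filt_mono I hs.2) le_rfl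
    exact hWs measurableSet_Iio
  -- measurability of the stopped wealth process
  have facmeas : ∀ t, 1 ≤ t → t ≤ N →
      Measurable[filt I t] (stopFac π f q I (lam mstar) τ mstar t) := by
    intro t ht1 htN
    unfold stopFac
    have hτm : MeasurableSet[filt I t] {ω | t ≤ τ ω} :=
      (filt_mono I (Nat.sub_le t 1)) _ (hτmeas t ht1 htN)
    have hlamm : Measurable[filt I t] (lam mstar t) :=
      ((hlam_meas mstar hm01 t ht1 htN).measurable).mono (filt_mono I (Nat.sub_le t 1)) le_rfl
    have hlam' : Measurable[filt I t] (fun ω => if t ≤ τ ω then lam mstar t ω else 0) :=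
      Measurable.ite hτm hlamm measurable_const
    have hZ : Measurable[filt I t] (Zt π f q I t) :=
      meas_Zt π f q I ht1 (fun i => (hq_meas t ht1 htN i).measurable)
    have hmu : Measurable[filt I t] (muT π f I mstar t) :=
      (meas_muT π f I mstar t).mono (filt_mono I (Nat.sub_le t 1)) le_rfl
    exact measurable_const.add (hlam'.mul (hZ.sub hmu))
  have Wpmeas : ∀ t, t ≤ N → Measurable[filt I t] (stopW π f q I (lam mstar) τ mstar t) := by
    intro t htN
    unfold stopW
    refine Finset.measurable_prod _ fun j hj => ?_
    rw [Finset.mem_Icc] at hj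
    exact (facmeas j hj.1 (le_trans hj.2 htN)).mono (filt_mono I hj.2) le_rfl
  -- main martingale induction
  have main : ∀ t, t ≤ N → Integrable (stopW π f q I (lam mstar) τ mstar t) μ ∧
      ∫ ω, stopW π f q I (lam mstar) τ mstar t ω ∂μ = 1 := by
    intro t
    induction t with
    | zero =>
      intro _
      have h0 : stopW π f q I (lam mstar) τ mstar 0 = fun _ => (1:ℝ) :=
        funext fun ω => stopW_zero π f q I (lam mstar) τ mstar ω
      rw [h0]
      exact ⟨integrable_const 1, by simp⟩
    | succ s ih =>
      intro hsN
      have hs : s ≤ N := le_trans (Nat.le_succ s) hsN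
      obtain ⟨ihInt, ihI⟩ := ih hs
      have h1 : 1 ≤ s + 1 := Nat.succ_le_succ (Nat.zero_le s)
      set G : Ω → Fin N → ℝ := fun ω i => stopW π f q I (lam mstar) τ mstar s ω *
        (1 + (if s+1 ≤ τ ω then lam mstar (s+1) ω else 0) *
          (f i * (π i / q (s+1) ω i) - muT π f I mstar (s+1) ω)) with hG
      have hGmeas : ∀ i, StronglyMeasurable[filt I ((s+1) - 1)] fun ω => G ω i := by
        intro i
        refine Measurable.stronglyMeasurable ?_
        have hτm : MeasurableSet[filt I s] {ω | s+1 ≤ τ ω} := hτmeas (s+1) h1 hsN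
        have hlamm : Measurable[filt I s] (lam mstar (s+1)) :=
          (hlam_meas mstar hm01 (s+1) h1 hsN).measurable
        have hqm : Measurable[filt I s] (fun ω => f i * (π i / q (s+1) ω i)) :=
          (measurable_const.div (hq_meas (s+1) h1 hsN i).measurable).const_mul _
        exact (Wpmeas s hs).mul (measurable_const.add
          ((Measurable.ite hτm hlamm measurable_const).mul
            (hqm.sub (meas_muT π f I mstar (s+1)))))
      have hGI : (fun ω => G ω (I (s+1) ω)) = stopW π f q I (lam mstar) τ mstar (s+1) := by
        funext ω
        rw [stopW_succ]
        simp only [hG, stopFac, Zt]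
      have hcnd := hcond (s+1) h1 hsN G hGmeas
      rw [hGI] at hcnd
      have halg : (fun ω => ∑ i ∈ remaining I (s+1) ω, q (s+1) ω i * G ω i)
          = stopW π f q I (lam mstar) τ mstar s := by
        funext ω
        have hqs := hq_sum (s+1) ω h1 hsN
        have hqp := hq_pos (s+1) ω h1 hsN
        have hWoRω : ∀ u, 1 ≤ u → u ≤ N → I u ω ∈ remaining I u ω :=
          fun u hu1 hu2 => hWoR u ω hu1 hu2
        have hmu : ∑ i ∈ remaining I (s+1) ω, f i * π i = muT π f I mstar (s+1) ω := by
          rw [sum_remaining π f I ω hsN hWoRω, muT, hmstar]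
        have hk := key_alg (remaining I (s+1) ω) (q (s+1) ω) (fun i => f i * π i)
          (stopW π f q I (lam mstar) τ mstar s ω)
          (if s+1 ≤ τ ω then lam mstar (s+1) ω else 0)
          (muT π f I mstar (s+1) ω) hqs hqp hmu
        rw [← hk]
        refine Finset.sum_congr rfl fun i hi => ?_
        simp only [hG]
        rw [mul_div_assoc]
      rw [halg] at hcnd
      by_cases hInt : Integrable (stopW π f q I (lam mstar) τ mstar (s+1)) μ
      · refine ⟨hInt, ?_⟩
        calc ∫ ω, stopW π f q I (lam mstar) τ mstar (s+1) ω ∂μ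
            = ∫ ω, (μ[stopW π f q I (lam mstar) τ mstar (s+1) | filt I ((s+1)-1)]) ω ∂μ :=
              (integral_condExp (hle s)).symm
          _ = ∫ ω, stopW π f q I (lam mstar) τ mstar s ω ∂μ := integral_congr_ae hcnd
          _ = 1 := ihI
      · exfalso
        rw [condExp_of_not_integrable hInt] at hcnd
        have h0 : ∫ ω, stopW π f q I (lam mstar) τ mstar s ω ∂μ = 0 := by
          rw [← integral_congr_ae hcnd]; simp
        rw [ihI] at h0
        exact one_ne_zero h0
  -- stopped process equals stopped wealth
  have stopEq : ∀ t, t ≤ N → ∀ ω,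
      stopW π f q I (lam mstar) τ mstar t ω = W mstar (min t (τ ω)) ω := by
    intro t
    induction t with
    | zero =>
      intro _ ω
      rw [stopW_zero]
      simp [hW0 mstar hm01 ω]
    | succ s ih =>
      intro hsN ω
      have hs : s ≤ N := le_trans (Nat.le_succ s) hsN
      rw [stopW_succ]
      by_cases hτs : s+1 ≤ τ ω
      · have hmin1 : min (s+1) (τ ω) = s+1 := min_eq_left hτs
        have hmin2 : min s (τ ω) = s := min_eq_left (le_trans (Nat.le_succ s) hτs)
        rw [ih hs ω, hmin1, hmin2,
          hWrec mstar hm01 (s+1) (Nat.succ_le_succ (Nat.zero_le s)) hsN ω]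
        simp only [stopFac, if_pos hτs, Nat.add_sub_cancel]
      · have hτle : τ ω ≤ s := Nat.lt_succ_iff.mp (lt_of_not_ge hτs)
        have hmin1 : min (s+1) (τ ω) = τ ω := min_eq_right (le_trans hτle (Nat.le_succ s))
        have hmin2 : min s (τ ω) = τ ω := min_eq_right hτle
        rw [ih hs ω, hmin1, hmin2]
        simp [stopFac, if_neg hτs, not_lt.mpr hτle]
  -- nonnegativity
  have hnonneg : 0 ≤ᵐ[μ] stopW π f q I (lam mstar) τ mstar N := by
    have hae : ∀ᵐ ω ∂μ, ∀ t, 1 ≤ t → t ≤ N →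
        0 ≤ 1 + lam mstar t ω * (Zt π f q I t ω - muT π f I mstar t ω) := by
      rw [ae_all_iff]
      intro t
      by_cases hcase : 1 ≤ t ∧ t ≤ N
      · filter_upwards [hfac mstar hm01 t hcase.1 hcase.2] with ω h _ _
        exact h
      · exact ae_of_all _ fun ω ht1 htN => absurd ⟨ht1, htN⟩ hcase
    filter_upwards [hae] with ω hω
    unfold stopW
    refine Finset.prod_nonneg fun j hj => ?_
    rw [Finset.mem_Icc] at hj
    unfold stopFac
    by_cases hj' : j ≤ τ ω
    · rw [if_pos hj']
      exact hω j hj.1 hj.2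
    · rw [if_neg hj']
      simp
  -- event inclusion
  have hsub : {ω | ∃ t, 1 ≤ t ∧ t ≤ N ∧
        mstar ∉ {m : ℝ | m ∈ Set.Icc (0:ℝ) 1 ∧ W m t ω < 1 / δ}}
      ⊆ {ω | 1/δ ≤ stopW π f q I (lam mstar) τ mstar N ω} := by
    intro ω hω
    obtain ⟨t, ht1, htN, hnot⟩ := hω
    simp only [Set.mem_setOf_eq, not_and] at hnot
    have hge : 1/δ ≤ W mstar t ω := le_of_not_gt (hnot hm01)
    have hne : (hitSet (W mstar) (1/δ) N ω).Nonempty := ⟨t, ht1, htN, hge⟩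
    have hmem := hitTime_mem hne
    have heq := stopEq N le_rfl ω
    rw [min_eq_right (hitTime_le _ _ _ ω)] at heq
    rw [Set.mem_setOf_eq, heq]
    exact hmem.2.2
  -- Markov
  obtain ⟨hIntN, hIN⟩ := main N le_rfl
  have hmark := mul_meas_ge_le_integral_of_nonneg hnonneg hIntN (1/δ)
  rw [hIN] at hmark
  have hμfin : μ {ω | 1/δ ≤ stopW π f q I (lam mstar) τ mstar N ω} ≠ ⊤ := measure_ne_top μ _
  have htoR : (μ {ω | 1/δ ≤ stopW π f q I (lam mstar) τ mstar N ω}).toReal ≤ δ := by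
    have h2 : δ * (1/δ * (μ {ω | 1/δ ≤ stopW π f q I (lam mstar) τ mstar N ω}).toReal)
        ≤ δ * 1 := mul_le_mul_of_nonneg_left hmark (le_of_lt hδ0)
    rw [← mul_assoc, mul_one_div, div_self (ne_of_gt hδ0), one_mul, mul_one] at h2
    exact h2
  refine le_trans (measure_mono hsub) ?_
  exact (ENNReal.le_ofReal_iff_toReal_le hμfin (le_of_lt hδ0)).mpr htoR

end RLFA
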